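/- For k,ℓ ≥ 1 and n ≥ k+ℓ+1, the maximum number of matches of MMP(0,k,0,ℓ) over σ ∈ S_n(132) is n-k-ℓ, and the number of σ ∈ S_n(132) achieving this maximum is C_k · C_ℓ · C_{n-k-ℓ}. -/

import Mathlib

open Finset

/-- σ avoids the classical pattern 132. -/
def avoids132 {n : ℕ} (σ : Equiv.Perm (Fin n)) : Prop :=
  ¬ ∃ i j k : Fin n, i < j ∧ j < k ∧ σ i < σ k ∧ σ k < σ j

/-- position `i` matches the quadrant marked mesh pattern MMP(a,b,c,d) in σ. -/
def mmpMatch {n : ℕ} (a b c d : ℕ) (σ : Equiv.Perm (Fin n)) (i : Fin n) : Prop :=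
  a ≤ (Finset.univ.filter fun j => i < j ∧ σ i < σ j).card ∧
  b ≤ (Finset.univ.filter fun j => j < i ∧ σ i < σ j).card ∧
  c ≤ (Finset.univ.filter fun j => j < i ∧ σ j < σ i).card ∧
  d ≤ (Finset.univ.filter fun j => i < j ∧ σ j < σ i).card

/-- the number of positions of σ matching MMP(a,b,c,d). -/
noncomputable def mmp {n : ℕ} (a b c d : ℕ) (σ : Equiv.Perm (Fin n)) : ℕ :=
  Nat.card {i : Fin n // mmpMatch a b c d σ i}

section Helpers
open Equiv

instance {n a b c d : ℕ} (σ : Equiv.Perm (Fin n)) : DecidablePred (mmpMatch a b c d σ) :=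
  fun i => by unfold mmpMatch; infer_instance

instance {n : ℕ} (σ : Equiv.Perm (Fin n)) : Decidable (avoids132 σ) := by
  unfold avoids132; infer_instance

lemma mmp_eq_card {n a b c d : ℕ} (σ : Equiv.Perm (Fin n)) :
    mmp a b c d σ = (univ.filter (mmpMatch a b c d σ)).card := by
  rw [mmp, Nat.card_eq_fintype_card, Fintype.card_subtype]

lemma card_filter_val_lt (n a : ℕ) (h : a ≤ n) :
    (univ.filter fun i : Fin n => i.val < a).card = a := by
  rw [← Fintype.card_subtype]
  have e : {i : Fin n // i.val < a} ≃ Fin a :=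
    ⟨fun x => ⟨x.1.1, x.2⟩, fun x => ⟨⟨x.1, lt_of_lt_of_le x.2 h⟩, x.2⟩,
      fun x => rfl, fun x => rfl⟩
  rw [Fintype.card_congr e, Fintype.card_fin]

lemma card_filter_val_ge (n a : ℕ) (h : a ≤ n) :
    (univ.filter fun i : Fin n => a ≤ i.val).card = n - a := by
  have h2 := Finset.card_filter_add_card_filter_not (s := (univ : Finset (Fin n)))
    (p := fun i : Fin n => i.val < a)
  simp only [not_lt, card_filter_val_lt n a h, card_univ, Fintype.card_fin] at h2
  omega

variable {n : ℕ} (σ : Equiv.Perm (Fin n))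

lemma match_pos_lb {k : ℕ} (i : Fin n)
    (h : k ≤ (univ.filter fun j => j < i ∧ σ i < σ j).card) : k ≤ i.val := by
  calc k ≤ (univ.filter fun j => j < i ∧ σ i < σ j).card := h
    _ ≤ (univ.filter fun j : Fin n => j.val < i.val).card := by
        apply Finset.card_le_card
        intro j hj
        simp only [Finset.mem_filter, Finset.mem_univ, true_and] at hj ⊢
        exact hj.1
    _ = i.val := card_filter_val_lt n i.val i.isLt.le

lemma match_pos_ub {l : ℕ} (i : Fin n)
    (h : l ≤ (univ.filter fun j => i < j ∧ σ j < σ i).card) : i.val < n - l := by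
  have h2 : l ≤ (univ.filter fun j : Fin n => i.val + 1 ≤ j.val).card := by
    refine le_trans h (Finset.card_le_card ?_)
    intro j hj
    simp only [Finset.mem_filter, Finset.mem_univ, true_and] at hj ⊢
    exact hj.1
  rw [card_filter_val_ge n (i.val+1) i.isLt] at h2
  omega

lemma top_compl {a b : ℕ} (hab : a + b = n)
    (h : ∀ p : Fin n, p.val < a → b ≤ (σ p).val) :
    ∀ p : Fin n, a ≤ p.val → (σ p).val < b := by
  intro p hp
  by_contra hc
  push_neg at hc
  have himg : (univ.filter fun i : Fin n => i.val < a).image σ ⊆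
      univ.filter fun v : Fin n => b ≤ v.val := by
    intro v hv
    simp only [Finset.mem_image, Finset.mem_filter, Finset.mem_univ, true_and] at hv ⊢
    obtain ⟨i, hi, rfl⟩ := hv
    exact h i hi
  have hcard : ((univ.filter fun i : Fin n => i.val < a).image σ).card = a := by
    rw [Finset.card_image_of_injective _ σ.injective, card_filter_val_lt n a (by omega)]
  have hcard2 : (univ.filter fun v : Fin n => b ≤ v.val).card = a := by
    rw [card_filter_val_ge n b (by omega)]; omega
  have heq := Finset.eq_of_subset_of_card_le himg (by omega)
  have hmem : σ p ∈ (univ.filter fun i : Fin n => i.val < a).image σ := by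
    rw [heq]; simp [hc]
  simp only [Finset.mem_image, Finset.mem_filter, Finset.mem_univ, true_and] at hmem
  obtain ⟨q, hq, hqe⟩ := hmem
  have := σ.injective hqe
  omega

lemma bot_compl {a b : ℕ} (hab : a + b = n)
    (h : ∀ p : Fin n, a ≤ p.val → (σ p).val < b) :
    ∀ p : Fin n, p.val < a → b ≤ (σ p).val := by
  intro p hp
  by_contra hc
  push_neg at hc
  have himg : (univ.filter fun i : Fin n => a ≤ i.val).image σ ⊆
      univ.filter fun v : Fin n => v.val < b := by
    intro v hv
    simp only [Finset.mem_image, Finset.mem_filter, Finset.mem_univ, true_and] at hv ⊢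
    obtain ⟨i, hi, rfl⟩ := hv
    exact h i hi
  have hcard : ((univ.filter fun i : Fin n => a ≤ i.val).image σ).card = b := by
    rw [Finset.card_image_of_injective _ σ.injective, card_filter_val_ge n a (by omega)]; omega
  have hcard2 : (univ.filter fun v : Fin n => v.val < b).card = b := by
    rw [card_filter_val_lt n b (by omega)]
  have heq := Finset.eq_of_subset_of_card_le himg (by omega)
  have hmem : σ p ∈ (univ.filter fun i : Fin n => a ≤ i.val).image σ := by
    rw [heq]; simp [hc]
  simp only [Finset.mem_image, Finset.mem_filter, Finset.mem_univ, true_and] at hmem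
  obtain ⟨q, hq, hqe⟩ := hmem
  have := σ.injective hqe
  omega

/-- the skew sum of two permutations: `A` acts on the first `a` positions with the
top `a` values, `B` on the last `b` positions with the bottom `b` values. -/
def sk2 {a b : ℕ} (A : Equiv.Perm (Fin a)) (B : Equiv.Perm (Fin b)) : Equiv.Perm (Fin (a+b)) :=
  (finSumFinEquiv.symm.trans ((Equiv.sumCongr A B).trans ((Equiv.sumComm (Fin a) (Fin b)).trans
    (finSumFinEquiv.trans (finCongr (Nat.add_comm b a))))))

lemma sk2_castAdd {a b : ℕ} (A : Equiv.Perm (Fin a)) (B : Equiv.Perm (Fin b)) (x : Fin a) :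
    (sk2 A B (Fin.castAdd b x)).val = b + (A x).val := by
  simp [sk2]; omega

lemma sk2_natAdd {a b : ℕ} (A : Equiv.Perm (Fin a)) (B : Equiv.Perm (Fin b)) (y : Fin b) :
    (sk2 A B (Fin.natAdd a y)).val = (B y).val := by
  simp [sk2]

lemma sk2_apply_lt {a b : ℕ} (A : Equiv.Perm (Fin a)) (B : Equiv.Perm (Fin b))
    (i : Fin (a+b)) (h : i.val < a) :
    (sk2 A B i).val = b + (A ⟨i.val, h⟩).val := by
  have hi : i = Fin.castAdd b ⟨i.val, h⟩ := by ext; rfl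
  conv_lhs => rw [hi]
  exact sk2_castAdd A B _

lemma sk2_apply_ge {a b : ℕ} (A : Equiv.Perm (Fin a)) (B : Equiv.Perm (Fin b))
    (i : Fin (a+b)) (h : a ≤ i.val) :
    (sk2 A B i).val = (B ⟨i.val - a, by omega⟩).val := by
  have hi : i = Fin.natAdd a ⟨i.val - a, by omega⟩ := by ext; simp; omega
  conv_lhs => rw [hi]
  exact sk2_natAdd A B _


/-- the first `a` positions carry the top `a` values. -/
def FirstTop (a b : ℕ) (σ : Equiv.Perm (Fin (a+b))) : Prop :=
  ∀ p : Fin (a+b), p.val < a → b ≤ (σ p).val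

lemma firstTop_sk2 {a b : ℕ} (A : Equiv.Perm (Fin a)) (B : Equiv.Perm (Fin b)) :
    FirstTop a b (sk2 A B) := fun p hp => by
  rw [sk2_apply_lt A B p hp]; omega

lemma avoids132_sk2_iff {a b : ℕ} (A : Equiv.Perm (Fin a)) (B : Equiv.Perm (Fin b)) :
    avoids132 (sk2 A B) ↔ avoids132 A ∧ avoids132 B := by
  unfold avoids132
  rw [← not_or]
  apply not_congr
  constructor
  · rintro ⟨i, j, e, hij, hje, h1, h2⟩
    rcases lt_or_ge e.val a with he | he
    · have hj : j.val < a := lt_trans hje he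
      have hi : i.val < a := lt_trans hij hj
      left
      refine ⟨⟨i.val, hi⟩, ⟨j.val, hj⟩, ⟨e.val, he⟩, hij, hje, ?_, ?_⟩
      · have := sk2_apply_lt A B i hi; have := sk2_apply_lt A B e he
        simp only [Fin.lt_def] at h1 ⊢; omega
      · have := sk2_apply_lt A B j hj; have := sk2_apply_lt A B e he
        simp only [Fin.lt_def] at h2 ⊢; omega
    · have hi : a ≤ i.val := by
        by_contra hc
        push_neg at hc
        have v1 := sk2_apply_lt A B i hc
        have v2 := sk2_apply_ge A B e he
        have := (B ⟨e.val - a, by omega⟩).isLt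
        simp only [Fin.lt_def] at h1; omega
      have hj : a ≤ j.val := le_trans hi (le_of_lt hij)
      right
      refine ⟨⟨i.val - a, by omega⟩, ⟨j.val - a, by omega⟩, ⟨e.val - a, by omega⟩,
        ?_, ?_, ?_, ?_⟩
      · simp only [Fin.lt_def]; simp only [Fin.lt_def] at hij; omega
      · simp only [Fin.lt_def]; simp only [Fin.lt_def] at hje; omega
      · have := sk2_apply_ge A B i hi; have := sk2_apply_ge A B e he
        simp only [Fin.lt_def] at h1 ⊢; omega
      · have := sk2_apply_ge A B j hj; have := sk2_apply_ge A B e he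
        simp only [Fin.lt_def] at h2 ⊢; omega
  · rintro (⟨i, j, e, hij, hje, h1, h2⟩ | ⟨i, j, e, hij, hje, h1, h2⟩)
    · refine ⟨Fin.castAdd b i, Fin.castAdd b j, Fin.castAdd b e, ?_, ?_, ?_, ?_⟩
      · exact hij
      · exact hje
      · have := sk2_castAdd A B i; have := sk2_castAdd A B e
        simp only [Fin.lt_def] at h1 ⊢; omega
      · have := sk2_castAdd A B j; have := sk2_castAdd A B e
        simp only [Fin.lt_def] at h2 ⊢; omega
    · refine ⟨Fin.natAdd a i, Fin.natAdd a j, Fin.natAdd a e, ?_, ?_, ?_, ?_⟩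
      · simp only [Fin.lt_def, Fin.coe_natAdd]
        simp only [Fin.lt_def] at hij; omega
      · simp only [Fin.lt_def, Fin.coe_natAdd]
        simp only [Fin.lt_def] at hje; omega
      · have := sk2_natAdd A B i; have := sk2_natAdd A B e
        simp only [Fin.lt_def] at h1 ⊢; omega
      · have := sk2_natAdd A B j; have := sk2_natAdd A B e
        simp only [Fin.lt_def] at h2 ⊢; omega

section Res
variable {a b : ℕ}

lemma Equiv.Perm.apply_inv_self {α : Type*} (f : Equiv.Perm α) (x : α) : f (f⁻¹ x) = x :=
  f.apply_symm_apply x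

lemma Equiv.Perm.inv_apply_self {α : Type*} (f : Equiv.Perm α) (x : α) : f⁻¹ (f x) = x :=
  f.symm_apply_apply x

lemma firstTop_ge (σ : Equiv.Perm (Fin (a+b))) (h : FirstTop a b σ) :
    ∀ p : Fin (a+b), a ≤ p.val → (σ p).val < b :=
  top_compl σ rfl h

lemma firstTop_inv_lt (σ : Equiv.Perm (Fin (a+b))) (h : FirstTop a b σ) :
    ∀ v : Fin (a+b), b ≤ v.val → (σ⁻¹ v).val < a := by
  intro v hv
  by_contra hc
  push_neg at hc
  have h2 := firstTop_ge σ h (σ⁻¹ v) hc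
  rw [Equiv.Perm.apply_inv_self] at h2
  omega

lemma firstTop_inv_ge (σ : Equiv.Perm (Fin (a+b))) (h : FirstTop a b σ) :
    ∀ v : Fin (a+b), v.val < b → a ≤ (σ⁻¹ v).val := by
  intro v hv
  by_contra hc
  push_neg at hc
  have h2 := h (σ⁻¹ v) hc
  rw [Equiv.Perm.apply_inv_self] at h2
  omega

/-- restriction of a `FirstTop` permutation to its first block. -/
def resA (σ : Equiv.Perm (Fin (a+b))) (h : FirstTop a b σ) : Equiv.Perm (Fin a) where
  toFun x := ⟨(σ (Fin.castAdd b x)).val - b, by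
    have h1 := h (Fin.castAdd b x) x.isLt
    have h2 := (σ (Fin.castAdd b x)).isLt
    omega⟩
  invFun x := ⟨(σ⁻¹ ⟨b + x.val, by omega⟩).val, firstTop_inv_lt σ h _ (by simp)⟩
  left_inv x := by
    ext
    have h1 := h (Fin.castAdd b x) x.isLt
    simp only
    have he : (⟨b + ((σ (Fin.castAdd b x)).val - b), by omega⟩ : Fin (a+b)) =
        σ (Fin.castAdd b x) := by ext; simp; omega
    rw [he, Equiv.Perm.inv_apply_self]
    rfl
  right_inv x := by
    ext
    simp only
    have he : Fin.castAdd b (⟨(σ⁻¹ ⟨b + x.val, by omega⟩).val,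
        firstTop_inv_lt σ h _ (by simp)⟩ : Fin a) = σ⁻¹ ⟨b + x.val, by omega⟩ := by
      ext; rfl
    rw [he, Equiv.Perm.apply_inv_self]
    simp

/-- restriction of a `FirstTop` permutation to its second block. -/
def resB (σ : Equiv.Perm (Fin (a+b))) (h : FirstTop a b σ) : Equiv.Perm (Fin b) where
  toFun y := ⟨(σ (Fin.natAdd a y)).val, firstTop_ge σ h _ (by simp)⟩
  invFun y := ⟨(σ⁻¹ ⟨y.val, by omega⟩).val - a, by
    have h1 := firstTop_inv_ge σ h ⟨y.val, by omega⟩ y.isLt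
    have h2 := (σ⁻¹ (⟨y.val, by omega⟩ : Fin (a+b))).isLt
    omega⟩
  left_inv y := by
    ext
    simp only
    have he : (⟨(σ (Fin.natAdd a y)).val, by omega⟩ : Fin (a+b)) = σ (Fin.natAdd a y) := by
      ext; rfl
    rw [he, Equiv.Perm.inv_apply_self]
    simp
  right_inv y := by
    ext
    simp only
    have h1 := firstTop_inv_ge σ h ⟨y.val, by omega⟩ y.isLt
    have he : Fin.natAdd a (⟨(σ⁻¹ ⟨y.val, by omega⟩).val - a, by
        have h2 := (σ⁻¹ (⟨y.val, by omega⟩ : Fin (a+b))).isLt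
        omega⟩ : Fin b) = σ⁻¹ ⟨y.val, by omega⟩ := by
      ext; show a + ((σ⁻¹ ⟨y.val, by omega⟩).val - a) = _; omega
    rw [he, Equiv.Perm.apply_inv_self]

lemma sk2_res (σ : Equiv.Perm (Fin (a+b))) (h : FirstTop a b σ) :
    sk2 (resA σ h) (resB σ h) = σ := by
  apply Equiv.ext
  intro i
  ext
  rcases lt_or_ge i.val a with hi | hi
  · rw [sk2_apply_lt _ _ i hi]
    have h1 := h i hi
    have hci : Fin.castAdd b (⟨i.val, hi⟩ : Fin a) = i := by ext; rfl
    show b + ((resA σ h) ⟨i.val, hi⟩).val = (σ i).val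
    simp only [resA, Equiv.coe_fn_mk, hci]
    omega
  · rw [sk2_apply_ge _ _ i hi]
    have hni : Fin.natAdd a (⟨i.val - a, by omega⟩ : Fin b) = i := by ext; simp; omega
    show ((resB σ h) ⟨i.val - a, by omega⟩).val = (σ i).val
    simp only [resB, Equiv.coe_fn_mk, hni]

end Res

lemma resA_sk2 {a b : ℕ} (A : Equiv.Perm (Fin a)) (B : Equiv.Perm (Fin b)) :
    resA (sk2 A B) (firstTop_sk2 A B) = A := by
  apply Equiv.ext
  intro x
  ext
  show ((sk2 A B) (Fin.castAdd b x)).val - b = (A x).val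
  rw [sk2_castAdd]
  omega

lemma resB_sk2 {a b : ℕ} (A : Equiv.Perm (Fin a)) (B : Equiv.Perm (Fin b)) :
    resB (sk2 A B) (firstTop_sk2 A B) = B := by
  apply Equiv.ext
  intro y
  ext
  show ((sk2 A B) (Fin.natAdd a y)).val = (B y).val
  rw [sk2_natAdd]

/-- the main block-splitting equivalence. -/
def sk2Equiv (a b : ℕ) :
    Equiv.Perm (Fin a) × Equiv.Perm (Fin b) ≃ {σ : Equiv.Perm (Fin (a+b)) // FirstTop a b σ} where
  toFun z := ⟨sk2 z.1 z.2, firstTop_sk2 z.1 z.2⟩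
  invFun σh := (resA σh.1 σh.2, resB σh.1 σh.2)
  left_inv z := by
    obtain ⟨A, B⟩ := z
    simp only [Prod.mk.injEq]
    exact ⟨resA_sk2 A B, resB_sk2 A B⟩
  right_inv σh := Subtype.ext (sk2_res σh.1 σh.2)


section Ext
variable {a : ℕ}

/-- extend a permutation of `Fin a` by a fixed point at the top. -/
def ext1 (A : Equiv.Perm (Fin a)) : Equiv.Perm (Fin (a+1)) where
  toFun i := if h : i.val < a then Fin.castSucc (A ⟨i.val, h⟩) else Fin.last a
  invFun i := if h : i.val < a then Fin.castSucc (A⁻¹ ⟨i.val, h⟩) else Fin.last a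
  left_inv i := by
    dsimp only
    rcases lt_or_ge i.val a with h | h
    · rw [dif_pos h]
      have hlt : (Fin.castSucc (A ⟨i.val, h⟩)).val < a := by
        simpa using (A ⟨i.val, h⟩).isLt
      rw [dif_pos hlt]
      ext
      simp
    · have hi : i = Fin.last a := Fin.ext (by have h2 := i.isLt; simp only [Fin.val_last]; omega)
      rw [hi, dif_neg (show ¬ (Fin.last a).val < a by simp),
        dif_neg (show ¬ (Fin.last a).val < a by simp)]
  right_inv i := by
    dsimp only
    rcases lt_or_ge i.val a with h | h
    · rw [dif_pos h]
      have hlt : (Fin.castSucc (A⁻¹ ⟨i.val, h⟩)).val < a := by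
        simpa using (A⁻¹ ⟨i.val, h⟩).isLt
      rw [dif_pos hlt]
      ext
      simp
    · have hi : i = Fin.last a := Fin.ext (by have h2 := i.isLt; simp only [Fin.val_last]; omega)
      rw [hi, dif_neg (show ¬ (Fin.last a).val < a by simp),
        dif_neg (show ¬ (Fin.last a).val < a by simp)]

lemma ext1_apply_lt (A : Equiv.Perm (Fin a)) (i : Fin (a+1)) (h : i.val < a) :
    (ext1 A i).val = (A ⟨i.val, h⟩).val := by
  show ((if h : i.val < a then _ else _ : Fin (a+1))).val = _
  rw [dif_pos h]
  simp

lemma ext1_apply_last (A : Equiv.Perm (Fin a)) (i : Fin (a+1)) (h : a ≤ i.val) :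
    (ext1 A i).val = a := by
  show ((if h : i.val < a then _ else _ : Fin (a+1))).val = _
  rw [dif_neg (by omega)]
  rfl

lemma avoids132_ext1_iff (A : Equiv.Perm (Fin a)) :
    avoids132 (ext1 A) ↔ avoids132 A := by
  unfold avoids132
  apply not_congr
  constructor
  · rintro ⟨i, j, e, hij, hje, h1, h2⟩
    have he : e.val < a := by
      by_contra hc
      push_neg at hc
      have hv := ext1_apply_last A e hc
      have := (ext1 A j).isLt
      simp only [Fin.lt_def] at h2
      omega
    have hj : j.val < a := by simp only [Fin.lt_def] at hje; omega
    have hi : i.val < a := by simp only [Fin.lt_def] at hij; omega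
    refine ⟨⟨i.val, hi⟩, ⟨j.val, hj⟩, ⟨e.val, he⟩, hij, hje, ?_, ?_⟩
    · have := ext1_apply_lt A i hi; have := ext1_apply_lt A e he
      simp only [Fin.lt_def] at h1 ⊢; omega
    · have := ext1_apply_lt A j hj; have := ext1_apply_lt A e he
      simp only [Fin.lt_def] at h2 ⊢; omega
  · rintro ⟨i, j, e, hij, hje, h1, h2⟩
    refine ⟨Fin.castSucc i, Fin.castSucc j, Fin.castSucc e, hij, hje, ?_, ?_⟩
    · have v1 := ext1_apply_lt A (Fin.castSucc i) (by simp [i.isLt])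
      have v2 := ext1_apply_lt A (Fin.castSucc e) (by simp [e.isLt])
      simp only [Fin.lt_def] at h1 ⊢
      simp only [Fin.coe_castSucc] at v1 v2
      rw [v1, v2]
      convert h1 using 3 <;> exact Fin.ext (by simp)
    · have v1 := ext1_apply_lt A (Fin.castSucc j) (by simp [j.isLt])
      have v2 := ext1_apply_lt A (Fin.castSucc e) (by simp [e.isLt])
      simp only [Fin.lt_def] at h2 ⊢
      simp only [Fin.coe_castSucc] at v1 v2
      rw [v1, v2]
      convert h2 using 3 <;> exact Fin.ext (by simp)

/-- the canonical equivalence between `Fin a` and the non-last elements of `Fin (a+1)`. -/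
def eA (a : ℕ) : {x : Fin (a+1) // x.val < a} ≃ Fin a where
  toFun x := ⟨x.1.val, x.2⟩
  invFun y := ⟨Fin.castSucc y, by simpa using y.isLt⟩
  left_inv x := by ext; simp
  right_inv y := by ext; simp

lemma res1_pf {C : Equiv.Perm (Fin (a+1))} (h : (C (Fin.last a)).val = a) :
    ∀ x : Fin (a+1), x.val < a ↔ (C x).val < a := by
  have hlast : C (Fin.last a) = Fin.last a := Fin.ext h
  intro x
  have e1 : ∀ y : Fin (a+1), (y.val < a ↔ y ≠ Fin.last a) := by
    intro y
    constructor
    · intro hlt heq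
      rw [heq] at hlt
      simp [Fin.last] at hlt
    · intro hne
      have h1 := y.isLt
      have h2 : y.val ≠ a := fun hv => hne (Fin.ext (by simpa [Fin.last] using hv))
      omega
  rw [e1 x, e1 (C x)]
  constructor
  · intro hne heq
    exact hne (C.injective (by rw [heq, hlast]))
  · intro hne heq
    exact hne (by rw [heq, hlast])

/-- restrict a permutation of `Fin (a+1)` fixing the top point to `Fin a`. -/
def res1 (C : Equiv.Perm (Fin (a+1))) (h : (C (Fin.last a)).val = a) : Equiv.Perm (Fin a) :=
  (Equiv.permCongr (eA a)) (C.subtypePerm (fun x => (res1_pf h x).symm))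

lemma res1_val (C : Equiv.Perm (Fin (a+1))) (h : (C (Fin.last a)).val = a) (x : Fin a) :
    (res1 C h x).val = (C (Fin.castSucc x)).val := rfl

/-- permutations of `Fin (a+1)` fixing the top point correspond to permutations of `Fin a`. -/
def extEquiv (a : ℕ) :
    Equiv.Perm (Fin a) ≃ {C : Equiv.Perm (Fin (a+1)) // (C (Fin.last a)).val = a} where
  toFun A := ⟨ext1 A, ext1_apply_last A (Fin.last a) (by simp [Fin.last])⟩
  invFun C := res1 C.1 C.2
  left_inv A := by
    apply Equiv.ext
    intro x
    ext
    rw [res1_val, ext1_apply_lt A _ (by simpa using x.isLt)]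
    exact congrArg Fin.val (congrArg A (Fin.ext (by simp)))
  right_inv C := by
    apply Subtype.ext
    apply Equiv.ext
    intro i
    ext
    rcases lt_or_ge i.val a with h | h
    · rw [ext1_apply_lt _ i h, res1_val]
      exact congrArg Fin.val (congrArg C.1 (Fin.ext (by simp)))
    · rw [ext1_apply_last _ i h]
      have hi : i = Fin.last a := by ext; simp [Fin.last]; omega
      rw [hi]
      exact C.2.symm

end Ext


section Transport

/-- transport a permutation along an equality of dimensions. -/
def castPermEquiv {m N : ℕ} (h : m = N) : Equiv.Perm (Fin m) ≃ Equiv.Perm (Fin N) :=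
  (finCongr h).permCongr

lemma castPermEquiv_val {m N : ℕ} (h : m = N) (σ : Equiv.Perm (Fin m)) (x : Fin N) :
    ((castPermEquiv h σ) x).val = (σ ⟨x.val, by omega⟩).val := by
  subst h
  rfl

lemma avoids132_castPermEquiv {m N : ℕ} (h : m = N) (σ : Equiv.Perm (Fin m)) :
    avoids132 (castPermEquiv h σ) ↔ avoids132 σ := by
  subst h
  have he : castPermEquiv rfl σ = σ := Equiv.ext fun x => rfl
  rw [he]

end Transport

section Dominate
variable {n : ℕ} (σ : Equiv.Perm (Fin n))

lemma val_ge_of_dominates (q : Fin n) (c : ℕ) (hc : c ≤ n)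
    (hd : ∀ r : Fin n, c ≤ r.val → σ r < σ q) : n - c ≤ (σ q).val := by
  have himg : (univ.filter fun i : Fin n => c ≤ i.val).image σ ⊆
      univ.filter fun v : Fin n => v.val < (σ q).val := by
    intro v hv
    simp only [Finset.mem_image, Finset.mem_filter, Finset.mem_univ, true_and] at hv ⊢
    obtain ⟨i, hi, rfl⟩ := hv
    exact hd i hi
  have h1 : ((univ.filter fun i : Fin n => c ≤ i.val).image σ).card = n - c := by
    rw [Finset.card_image_of_injective _ σ.injective, card_filter_val_ge n c hc]
  have h2 : (univ.filter fun v : Fin n => v.val < (σ q).val).card = (σ q).val :=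
    card_filter_val_lt n _ (σ q).isLt.le
  have := Finset.card_le_card himg
  omega

lemma val_lt_of_dominated (q : Fin n) (c : ℕ) (hc : c ≤ n)
    (hd : ∀ r : Fin n, r.val < c → σ q < σ r) : (σ q).val < n - c := by
  have himg : (univ.filter fun i : Fin n => i.val < c).image σ ⊆
      univ.filter fun v : Fin n => (σ q).val + 1 ≤ v.val := by
    intro v hv
    simp only [Finset.mem_image, Finset.mem_filter, Finset.mem_univ, true_and] at hv ⊢
    obtain ⟨i, hi, rfl⟩ := hv
    exact hd i hi
  have h1 : ((univ.filter fun i : Fin n => i.val < c).image σ).card = c := by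
    rw [Finset.card_image_of_injective _ σ.injective, card_filter_val_lt n c hc]
  have h2 : (univ.filter fun v : Fin n => (σ q).val + 1 ≤ v.val).card = n - ((σ q).val + 1) :=
    card_filter_val_ge n _ (σ q).isLt
  have h3 := Finset.card_le_card himg
  have h4 := (σ q).isLt
  omega

end Dominate

/-- restricting an equivalence onto a subtype to an extra condition. -/
def restrictEquiv {X α : Type*} {F : α → Prop} (E : X ≃ {σ : α // F σ}) (P : α → Prop) :
    {σ : α // F σ ∧ P σ} ≃ {x : X // P (E x).1} :=
  (Equiv.subtypeSubtypeEquivSubtypeInter F P).symm.trans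
    (E.subtypeEquiv (fun _ => Iff.rfl)).symm

/-- the number of 132-avoiding permutations of `Fin m`. -/
noncomputable def avCount (m : ℕ) : ℕ := Nat.card {A : Equiv.Perm (Fin m) // avoids132 A}

lemma avCount_zero : avCount 0 = 1 := by
  have hav : ∀ σ : Equiv.Perm (Fin 0), avoids132 σ := by
    rintro σ ⟨i, -⟩
    exact i.elim0
  rw [avCount, Nat.card_congr (Equiv.subtypeUnivEquiv hav), Nat.card_eq_fintype_card]
  simp

lemma fiber_card (n p : ℕ) (hp : p ≤ n) :
    Nat.card {σ : Equiv.Perm (Fin (n+1)) // avoids132 σ ∧ (σ ⟨p, by omega⟩).val = n} =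
      avCount p * avCount (n - p) := by
  have h1 : n + 1 = (p+1) + (n-p) := by omega
  -- step 1 : transport to the split index
  have e1 : {σ : Equiv.Perm (Fin (n+1)) // avoids132 σ ∧ (σ ⟨p, by omega⟩).val = n} ≃
      {τ : Equiv.Perm (Fin ((p+1)+(n-p))) // avoids132 τ ∧ (τ ⟨p, by omega⟩).val = n} := by
    refine (castPermEquiv h1).subtypeEquiv fun σ => ?_
    rw [avoids132_castPermEquiv, castPermEquiv_val]
  -- step 2 : add the FirstTop property
  have hFT : ∀ τ : Equiv.Perm (Fin ((p+1)+(n-p))), avoids132 τ → (τ ⟨p, by omega⟩).val = n →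
      FirstTop (p+1) (n-p) τ := by
    intro τ hav hval q hq
    rcases Nat.lt_or_ge q.val p with hq2 | hq2
    · have hdom : ∀ r : Fin ((p+1)+(n-p)), p+1 ≤ r.val → τ r < τ q := by
        intro r hr
        by_contra hc
        push_neg at hc
        have hne : τ q ≠ τ r := fun he => by
          have := τ.injective he
          omega
        have hlt : τ q < τ r := lt_of_le_of_ne hc hne
        apply hav
        refine ⟨q, ⟨p, by omega⟩, r, ?_, ?_, hlt, ?_⟩
        · show q.val < p
          exact hq2
        · show (p : ℕ) < r.val
          omega
        show (τ r).val < (τ ⟨p, by omega⟩).val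
        rw [hval]
        have hr1 := (τ r).isLt
        have hne2 : τ r ≠ τ ⟨p, by omega⟩ := fun he => by
          have := congrArg Fin.val (τ.injective he)
          simp at this
          omega
        have hne3 : (τ r).val ≠ n := fun hv => hne2 (Fin.ext (by rw [hv, hval]))
        omega
      have := val_ge_of_dominates τ q (p+1) (by omega) hdom
      omega
    · have hqp : q = ⟨p, by omega⟩ := Fin.ext (by show q.val = p; omega)
      rw [hqp, hval]
      omega
  have e2 : {τ : Equiv.Perm (Fin ((p+1)+(n-p))) // avoids132 τ ∧ (τ ⟨p, by omega⟩).val = n} ≃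
      {τ : Equiv.Perm (Fin ((p+1)+(n-p))) //
        FirstTop (p+1) (n-p) τ ∧ (avoids132 τ ∧ (τ ⟨p, by omega⟩).val = n)} :=
    Equiv.subtypeEquivRight fun τ =>
      ⟨fun h => ⟨hFT τ h.1 h.2, h⟩, fun h => h.2⟩
  -- step 3 : split off the two blocks
  have e3 := restrictEquiv (sk2Equiv (p+1) (n-p))
    (fun τ => avoids132 τ ∧ (τ ⟨p, by omega⟩).val = n)
  have e4 : {z : Equiv.Perm (Fin (p+1)) × Equiv.Perm (Fin (n-p)) //
        avoids132 ((sk2Equiv (p+1) (n-p) z).1) ∧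
          (((sk2Equiv (p+1) (n-p) z).1) ⟨p, by omega⟩).val = n} ≃
      {z : Equiv.Perm (Fin (p+1)) × Equiv.Perm (Fin (n-p)) //
        (avoids132 z.1 ∧ (z.1 (Fin.last p)).val = p) ∧ avoids132 z.2} := by
    refine Equiv.subtypeEquivRight fun z => ?_
    have hz : (sk2Equiv (p+1) (n-p) z).1 = sk2 z.1 z.2 := rfl
    rw [hz, avoids132_sk2_iff]
    have hval : ((sk2 z.1 z.2) ⟨p, by omega⟩).val = (n-p) + (z.1 ⟨p, by omega⟩).val :=
      sk2_apply_lt z.1 z.2 ⟨p, by omega⟩ (by simp)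
    have hlast : (Fin.last p) = (⟨p, by omega⟩ : Fin (p+1)) := rfl
    rw [hlast]
    have hub := (z.1 (⟨p, by omega⟩ : Fin (p+1))).isLt
    constructor
    · rintro ⟨⟨h1, h2⟩, h3⟩
      rw [hval] at h3
      exact ⟨⟨h1, by omega⟩, h2⟩
    · rintro ⟨⟨h1, h2⟩, h3⟩
      refine ⟨⟨h1, h3⟩, ?_⟩
      rw [hval, h2]
      omega
  have e5 : {z : Equiv.Perm (Fin (p+1)) × Equiv.Perm (Fin (n-p)) //
        (avoids132 z.1 ∧ (z.1 (Fin.last p)).val = p) ∧ avoids132 z.2} ≃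
      {A : Equiv.Perm (Fin (p+1)) // avoids132 A ∧ (A (Fin.last p)).val = p} ×
        {B : Equiv.Perm (Fin (n-p)) // avoids132 B} :=
    Equiv.subtypeProdEquivProd
      (p := fun A : Equiv.Perm (Fin (p+1)) => avoids132 A ∧ (A (Fin.last p)).val = p)
      (q := fun B : Equiv.Perm (Fin (n-p)) => avoids132 B)
  -- step 4 : the first factor
  have e6 : {A : Equiv.Perm (Fin (p+1)) // avoids132 A ∧ (A (Fin.last p)).val = p} ≃
      {A' : Equiv.Perm (Fin p) // avoids132 A'} := by
    refine Equiv.trans (Equiv.subtypeEquivRight fun A => and_comm) ?_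
    refine Equiv.trans (restrictEquiv (extEquiv p) avoids132) ?_
    exact Equiv.subtypeEquivRight fun A' => avoids132_ext1_iff A'
  calc Nat.card {σ : Equiv.Perm (Fin (n+1)) // avoids132 σ ∧ (σ ⟨p, by omega⟩).val = n}
      = Nat.card ({A : Equiv.Perm (Fin (p+1)) // avoids132 A ∧ (A (Fin.last p)).val = p} ×
        {B : Equiv.Perm (Fin (n-p)) // avoids132 B}) := by
        exact Nat.card_congr ((((e1.trans e2).trans e3).trans e4).trans e5)
    _ = avCount p * avCount (n - p) := by
        rw [Nat.card_prod, Nat.card_congr e6]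
        rfl

lemma avCount_succ (n : ℕ) : avCount (n+1) = ∑ q : Fin (n+1), avCount q.val * avCount (n - q.val) := by
  have f : {σ : Equiv.Perm (Fin (n+1)) // avoids132 σ} → Fin (n+1) :=
    fun x => x.1⁻¹ (Fin.last n)
  have e0 : {σ : Equiv.Perm (Fin (n+1)) // avoids132 σ} ≃
      Σ q : Fin (n+1), {x : {σ : Equiv.Perm (Fin (n+1)) // avoids132 σ} // x.1⁻¹ (Fin.last n) = q} :=
    (Equiv.sigmaFiberEquiv (fun x : {σ : Equiv.Perm (Fin (n+1)) // avoids132 σ} =>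
      x.1⁻¹ (Fin.last n))).symm
  have efib : ∀ q : Fin (n+1),
      {x : {σ : Equiv.Perm (Fin (n+1)) // avoids132 σ} // x.1⁻¹ (Fin.last n) = q} ≃
      {σ : Equiv.Perm (Fin (n+1)) // avoids132 σ ∧ (σ ⟨q.val, by omega⟩).val = n} := by
    intro q
    refine Equiv.trans (Equiv.subtypeSubtypeEquivSubtypeInter
      (fun σ : Equiv.Perm (Fin (n+1)) => avoids132 σ)
      (fun σ : Equiv.Perm (Fin (n+1)) => σ⁻¹ (Fin.last n) = q)) ?_
    refine Equiv.subtypeEquivRight fun σ => ?_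
    have hq : (⟨q.val, by omega⟩ : Fin (n+1)) = q := Fin.ext rfl
    rw [hq]
    constructor
    · rintro ⟨h1, h2⟩
      refine ⟨h1, ?_⟩
      have : σ q = Fin.last n := by rw [← h2, Equiv.Perm.apply_inv_self]
      rw [this]
      rfl
    · rintro ⟨h1, h2⟩
      refine ⟨h1, ?_⟩
      have : σ q = Fin.last n := Fin.ext h2
      rw [← this, Equiv.Perm.inv_apply_self]
  rw [avCount, Nat.card_congr (e0.trans (Equiv.sigmaCongrRight efib))]
  rw [Nat.card_eq_fintype_card, Fintype.card_sigma]
  congr 1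
  funext q
  rw [← Nat.card_eq_fintype_card, fiber_card n q.val (by omega)]

lemma avCount_eq_catalan : ∀ m, avCount m = catalan m := by
  intro m
  induction m using Nat.strong_induction_on with
  | _ m ih =>
    match m with
    | 0 => rw [avCount_zero, catalan_zero]
    | (n+1) =>
      rw [avCount_succ, catalan_succ]
      apply Finset.sum_congr rfl
      intro q _
      rw [ih q.val (by omega), ih (n - q.val) (by omega)]


section Main
variable {n : ℕ} (k l : ℕ)

/-- the first `k` positions carry the top `k` values. -/
def Ltop (σ : Equiv.Perm (Fin n)) : Prop := ∀ j : Fin n, j.val < k → n - k ≤ (σ j).val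

/-- the last `l` positions carry the bottom `l` values. -/
def Rbot (σ : Equiv.Perm (Fin n)) : Prop := ∀ q : Fin n, n - l ≤ q.val → (σ q).val < l

lemma midT_card (hn : k + l + 1 ≤ n) : (univ.filter fun i : Fin n => k ≤ i.val ∧ i.val < n - l).card = n - k - l := by
  have hT : (univ.filter fun i : Fin n => k ≤ i.val ∧ i.val < n - l) =
      (univ.filter fun i : Fin n => i.val < n - l) \ (univ.filter fun i : Fin n => i.val < k) := by
    ext i
    simp only [Finset.mem_filter, Finset.mem_sdiff, Finset.mem_univ, true_and]
    omega
  rw [hT, Finset.card_sdiff_of_subset (by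
    intro i hi
    simp only [Finset.mem_filter, Finset.mem_univ, true_and] at hi ⊢
    omega)]
  rw [card_filter_val_lt n (n-l) (by omega), card_filter_val_lt n k (by omega)]
  omega

lemma matchS_subset (σ : Equiv.Perm (Fin n)) :
    univ.filter (mmpMatch 0 k 0 l σ) ⊆ univ.filter fun i : Fin n => k ≤ i.val ∧ i.val < n - l := by
  intro i hi
  simp only [Finset.mem_filter, Finset.mem_univ, true_and] at hi ⊢
  obtain ⟨-, hb, -, hd⟩ := hi
  exact ⟨match_pos_lb σ i hb, match_pos_ub σ i hd⟩

variable (hk : 1 ≤ k) (hl : 1 ≤ l) (hn : k + l + 1 ≤ n)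

include hk hl hn in
lemma mmp_le_max (σ : Equiv.Perm (Fin n)) : mmp 0 k 0 l σ ≤ n - k - l := by
  rw [mmp_eq_card]
  calc (univ.filter (mmpMatch 0 k 0 l σ)).card
      ≤ (univ.filter fun i : Fin n => k ≤ i.val ∧ i.val < n - l).card :=
        Finset.card_le_card (matchS_subset k l σ)
    _ = n - k - l := midT_card k l hn

include hk hl hn in
lemma extremal_iff (σ : Equiv.Perm (Fin n)) :
    (avoids132 σ ∧ mmp 0 k 0 l σ = n - k - l) ↔
      (avoids132 σ ∧ Ltop k σ ∧ Rbot l σ) := by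
  constructor
  · rintro ⟨hav, hmmp⟩
    refine ⟨hav, ?_⟩
    -- every middle position matches
    have hS : univ.filter (mmpMatch 0 k 0 l σ) =
        univ.filter fun i : Fin n => k ≤ i.val ∧ i.val < n - l := by
      apply Finset.eq_of_subset_of_card_le (matchS_subset k l σ)
      rw [midT_card k l hn, ← mmp_eq_card, hmmp]
    have hmid : ∀ i : Fin n, k ≤ i.val → i.val < n - l → mmpMatch 0 k 0 l σ i := by
      intro i h1 h2
      have : i ∈ univ.filter (mmpMatch 0 k 0 l σ) := by
        rw [hS]
        simp only [Finset.mem_filter, Finset.mem_univ, true_and]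
        exact ⟨h1, h2⟩
      simpa using this
    -- step (a) : middle values are below the values of the first k positions
    have hA : ∀ i : Fin n, k ≤ i.val → i.val < n - l → ∀ j : Fin n, j.val < k → σ i < σ j := by
      intro i hi1 hi2 j hj
      by_contra hc
      push_neg at hc
      have hne : σ j ≠ σ i := fun he => by
        have := congrArg Fin.val (σ.injective he)
        omega
      have hji : σ j < σ i := lt_of_le_of_ne hc hne
      have hb := (hmid i hi1 hi2).2.1
      have hsub : (univ.filter fun t => t < i ∧ σ i < σ t) ⊆
          univ.filter fun t : Fin n => t.val < j.val := by
        intro t ht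
        simp only [Finset.mem_filter, Finset.mem_univ, true_and] at ht ⊢
        obtain ⟨ht1, ht2⟩ := ht
        by_contra hct
        push_neg at hct
        have hjt : j ≠ t := fun he => by
          rw [he] at hji
          exact absurd (lt_trans hji ht2) (lt_irrefl _)
        apply hav
        exact ⟨j, t, i, lt_of_le_of_ne hct hjt, ht1, hji, ht2⟩
      have := Finset.card_le_card hsub
      rw [card_filter_val_lt n j.val (by omega)] at this
      omega
    -- step (b) : the last middle position dominates the right block
    have hd1 : n - 1 - l < n := by omega
    set d : Fin n := ⟨n - 1 - l, hd1⟩ with hd_def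
    have hd_mid1 : k ≤ d.val := by simp [hd_def]; omega
    have hd_mid2 : d.val < n - l := by simp [hd_def]; omega
    have hGcard : (univ.filter fun t : Fin n => n - l ≤ t.val).card = l := by
      rw [card_filter_val_ge n (n - l) (by omega)]; omega
    have hG : (univ.filter fun t => d < t ∧ σ t < σ d) =
        univ.filter fun t : Fin n => n - l ≤ t.val := by
      apply Finset.eq_of_subset_of_card_le
      · intro t ht
        simp only [Finset.mem_filter, Finset.mem_univ, true_and] at ht ⊢
        have := ht.1
        simp only [Fin.lt_def, hd_def] at this
        omega
      · rw [hGcard]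
        exact (hmid d hd_mid1 hd_mid2).2.2.2
    have hb2 : ∀ q : Fin n, n - l ≤ q.val → σ q < σ d ∧ d < q := by
      intro q hq
      have : q ∈ univ.filter fun t => d < t ∧ σ t < σ d := by
        rw [hG]
        simp only [Finset.mem_filter, Finset.mem_univ, true_and]
        exact hq
      simp only [Finset.mem_filter, Finset.mem_univ, true_and] at this
      exact ⟨this.2, this.1⟩
    -- step (c) : middle values dominate the right block
    have hC : ∀ i : Fin n, k ≤ i.val → i.val < n - l → ∀ q : Fin n, n - l ≤ q.val →
        σ q < σ i := by
      intro i hi1 hi2 q hq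
      rcases eq_or_lt_of_le (show i.val ≤ d.val by simp [hd_def]; omega) with he | hlt
      · have : i = d := Fin.ext he
        rw [this]
        exact (hb2 q hq).1
      · by_contra hc
        push_neg at hc
        have hne : σ i ≠ σ q := fun hee => by
          have := congrArg Fin.val (σ.injective hee)
          omega
        have hiq : σ i < σ q := lt_of_le_of_ne hc hne
        apply hav
        exact ⟨i, d, q, hlt, (hb2 q hq).2, hiq, (hb2 q hq).1⟩
    constructor
    · -- Ltop
      intro j hj
      have hdom : ∀ r : Fin n, k ≤ r.val → σ r < σ j := by
        intro r hr
        rcases Nat.lt_or_ge r.val (n - l) with h1 | h1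
        · exact hA r hr h1 j hj
        · exact lt_trans (hb2 r h1).1 (hA d hd_mid1 hd_mid2 j hj)
      exact val_ge_of_dominates σ j k (by omega) hdom
    · -- Rbot
      intro q hq
      have hdom : ∀ r : Fin n, r.val < n - l → σ q < σ r := by
        intro r hr
        rcases Nat.lt_or_ge r.val k with h1 | h1
        · exact lt_trans (hb2 q hq).1 (hA d hd_mid1 hd_mid2 r h1)
        · exact hC r h1 hr q hq
      have := val_lt_of_dominated σ q (n - l) (by omega) hdom
      omega
  · rintro ⟨hav, hL, hR⟩
    refine ⟨hav, ?_⟩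
    have hLc : ∀ p : Fin n, k ≤ p.val → (σ p).val < n - k :=
      top_compl σ (by omega : k + (n - k) = n) hL
    have hRc : ∀ p : Fin n, p.val < n - l → l ≤ (σ p).val :=
      bot_compl σ (by omega : (n - l) + l = n) hR
    have hmatch : ∀ i : Fin n, k ≤ i.val → i.val < n - l → mmpMatch 0 k 0 l σ i := by
      intro i h1 h2
      refine ⟨Nat.zero_le _, ?_, Nat.zero_le _, ?_⟩
      · calc k = (univ.filter fun j : Fin n => j.val < k).card :=
              (card_filter_val_lt n k (by omega)).symm
          _ ≤ _ := by
              apply Finset.card_le_card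
              intro j hj
              simp only [Finset.mem_filter, Finset.mem_univ, true_and] at hj ⊢
              have hv1 := hL j hj
              have hv2 := hLc i h1
              exact ⟨by show j.val < i.val; omega, by show (σ i).val < (σ j).val; omega⟩
      · calc l = (univ.filter fun j : Fin n => n - l ≤ j.val).card := by
              rw [card_filter_val_ge n (n - l) (by omega)]; omega
          _ ≤ _ := by
              apply Finset.card_le_card
              intro j hj
              simp only [Finset.mem_filter, Finset.mem_univ, true_and] at hj ⊢
              have hv1 := hR j hj
              have hv2 := hRc i h2
              exact ⟨by show i.val < j.val; omega, by show (σ j).val < (σ i).val; omega⟩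
    rw [mmp_eq_card]
    have hST : univ.filter (mmpMatch 0 k 0 l σ) =
        univ.filter fun i : Fin n => k ≤ i.val ∧ i.val < n - l := by
      apply Finset.Subset.antisymm (matchS_subset k l σ)
      intro i hi
      simp only [Finset.mem_filter, Finset.mem_univ, true_and] at hi ⊢
      exact hmatch i hi.1 hi.2
    rw [hST, midT_card k l hn]

end Main


lemma sk2_apply_lt' {a b : ℕ} (A : Equiv.Perm (Fin a)) (B : Equiv.Perm (Fin b))
    (i : Fin (a+b)) (x : Fin a) (h : i.val = x.val) :
    (sk2 A B i).val = b + (A x).val := by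
  rw [sk2_apply_lt A B i (by omega)]
  have : (⟨i.val, by omega⟩ : Fin a) = x := Fin.ext h
  rw [this]

lemma sk2_apply_ge' {a b : ℕ} (A : Equiv.Perm (Fin a)) (B : Equiv.Perm (Fin b))
    (i : Fin (a+b)) (y : Fin b) (h : i.val = a + y.val) :
    (sk2 A B i).val = (B y).val := by
  rw [sk2_apply_ge A B i (by omega)]
  have : (⟨i.val - a, by omega⟩ : Fin b) = y := Fin.ext (by show i.val - a = y.val; omega)
  rw [this]

lemma castPermEquiv_val2 {m N : ℕ} (h : m = N) (σ : Equiv.Perm (Fin m)) (x : Fin N)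
    (y : Fin m) (hxy : x.val = y.val) : ((castPermEquiv h σ) x).val = (σ y).val := by
  subst h
  have : x = y := Fin.ext hxy
  rw [this]
  rfl


end Helpers

theorem stmt18 (k l n : ℕ) (hk : 1 ≤ k) (hl : 1 ≤ l) (hn : k + l + 1 ≤ n) :
    (∀ σ : Equiv.Perm (Fin n), avoids132 σ → mmp 0 k 0 l σ ≤ n - k - l) ∧
    Nat.card {σ : Equiv.Perm (Fin n) // avoids132 σ ∧ mmp 0 k 0 l σ = n - k - l} =
      catalan k * catalan l * catalan (n - k - l) := by
  constructor
  · intro σ _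
    exact mmp_le_max k l hk hl hn σ
  · have hcast : n = k + ((n - k - l) + l) := by omega
    have e1 : {σ : Equiv.Perm (Fin n) // avoids132 σ ∧ mmp 0 k 0 l σ = n - k - l} ≃
        {σ : Equiv.Perm (Fin n) // avoids132 σ ∧ Ltop k σ ∧ Rbot l σ} :=
      Equiv.subtypeEquivRight fun σ => extremal_iff k l hk hl hn σ
    have e2 : {σ : Equiv.Perm (Fin n) // avoids132 σ ∧ Ltop k σ ∧ Rbot l σ} ≃
        {τ : Equiv.Perm (Fin (k + ((n-k-l)+l))) //
          FirstTop k ((n-k-l)+l) τ ∧ (avoids132 τ ∧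
            ∀ q : Fin (k + ((n-k-l)+l)), k + (n-k-l) ≤ q.val → (τ q).val < l)} := by
      refine (castPermEquiv hcast).subtypeEquiv fun σ => ?_
      constructor
      · rintro ⟨hav, hL, hR⟩
        refine ⟨?_, (avoids132_castPermEquiv hcast σ).mpr hav, ?_⟩
        · intro j hj
          rw [castPermEquiv_val2 hcast σ j ⟨j.val, by omega⟩ rfl]
          have := hL ⟨j.val, by omega⟩ hj
          omega
        · intro q hq
          rw [castPermEquiv_val2 hcast σ q ⟨q.val, by omega⟩ rfl]
          have := hR ⟨q.val, by omega⟩ (by show n - l ≤ q.val; omega)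
          omega
      · rintro ⟨hFT, hav, hR⟩
        refine ⟨(avoids132_castPermEquiv hcast σ).mp hav, ?_, ?_⟩
        · intro j hj
          have h2 := hFT ⟨j.val, by omega⟩ hj
          rw [castPermEquiv_val2 hcast σ ⟨j.val, by omega⟩ j rfl] at h2
          show n - k ≤ (σ j).val
          omega
        · intro q hq
          have h2 := hR ⟨q.val, by omega⟩ (by show k + (n-k-l) ≤ q.val; omega)
          rw [castPermEquiv_val2 hcast σ ⟨q.val, by omega⟩ q rfl] at h2
          exact h2
    have e3 := restrictEquiv (sk2Equiv k ((n-k-l)+l))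
      (fun τ => avoids132 τ ∧
        ∀ q : Fin (k + ((n-k-l)+l)), k + (n-k-l) ≤ q.val → (τ q).val < l)
    have e4 : {z : Equiv.Perm (Fin k) × Equiv.Perm (Fin ((n-k-l)+l)) //
          avoids132 ((sk2Equiv k ((n-k-l)+l) z).1) ∧
            ∀ q : Fin (k + ((n-k-l)+l)), k + (n-k-l) ≤ q.val →
              (((sk2Equiv k ((n-k-l)+l) z).1) q).val < l} ≃
        {z : Equiv.Perm (Fin k) × Equiv.Perm (Fin ((n-k-l)+l)) //
          avoids132 z.1 ∧ (FirstTop (n-k-l) l z.2 ∧ avoids132 z.2)} := by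
      refine Equiv.subtypeEquivRight fun z => ?_
      have hz : (sk2Equiv k ((n-k-l)+l) z).1 = sk2 z.1 z.2 := rfl
      rw [hz, avoids132_sk2_iff]
      constructor
      · rintro ⟨⟨h1, h2⟩, h3⟩
        refine ⟨h1, ?_, h2⟩
        have hbb : ∀ q : Fin ((n-k-l)+l), (n-k-l) ≤ q.val → (z.2 q).val < l := by
          intro q hq
          have h4 := h3 ⟨k + q.val, by omega⟩ (by show k + (n-k-l) ≤ k + q.val; omega)
          rw [sk2_apply_ge' z.1 z.2 ⟨k + q.val, by omega⟩ q rfl] at h4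
          exact h4
        exact bot_compl z.2 rfl hbb
      · rintro ⟨h1, hFT2, h2⟩
        refine ⟨⟨h1, h2⟩, ?_⟩
        intro q hq
        rw [sk2_apply_ge' z.1 z.2 q ⟨q.val - k, by omega⟩
          (by show q.val = k + (q.val - k); omega)]
        exact top_compl z.2 rfl hFT2 ⟨q.val - k, by omega⟩
          (by show (n-k-l) ≤ q.val - k; omega)
    have e5 : {z : Equiv.Perm (Fin k) × Equiv.Perm (Fin ((n-k-l)+l)) //
          avoids132 z.1 ∧ (FirstTop (n-k-l) l z.2 ∧ avoids132 z.2)} ≃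
        {A : Equiv.Perm (Fin k) // avoids132 A} ×
          {B : Equiv.Perm (Fin ((n-k-l)+l)) // FirstTop (n-k-l) l B ∧ avoids132 B} :=
      Equiv.subtypeProdEquivProd
        (p := fun A : Equiv.Perm (Fin k) => avoids132 A)
        (q := fun B : Equiv.Perm (Fin ((n-k-l)+l)) => FirstTop (n-k-l) l B ∧ avoids132 B)
    have e6 : {B : Equiv.Perm (Fin ((n-k-l)+l)) // FirstTop (n-k-l) l B ∧ avoids132 B} ≃
        {M : Equiv.Perm (Fin (n-k-l)) // avoids132 M} ×
          {C : Equiv.Perm (Fin l) // avoids132 C} := by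
      refine Equiv.trans (restrictEquiv (sk2Equiv (n-k-l) l) avoids132) ?_
      refine Equiv.trans
        (Equiv.subtypeEquivRight
          (q := fun w : Equiv.Perm (Fin (n-k-l)) × Equiv.Perm (Fin l) =>
            avoids132 w.1 ∧ avoids132 w.2)
          (fun w => by
            have hz : (sk2Equiv (n-k-l) l w).1 = sk2 w.1 w.2 := rfl
            rw [hz, avoids132_sk2_iff])) ?_
      exact Equiv.subtypeProdEquivProd
        (p := fun M : Equiv.Perm (Fin (n-k-l)) => avoids132 M)
        (q := fun C : Equiv.Perm (Fin l) => avoids132 C)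
    have eTot := ((((e1.trans e2).trans e3).trans e4).trans e5).trans
      (Equiv.prodCongr (Equiv.refl _) e6)
    rw [Nat.card_congr eTot, Nat.card_prod, Nat.card_prod]
    show avCount k * (avCount (n-k-l) * avCount l) = _
    rw [avCount_eq_catalan, avCount_eq_catalan, avCount_eq_catalan]
    ring
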